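/- Let q ∈ ℂ and let 𝔞 be a noncrossing half-diagram on n points with p arcs having a minimum at position i (i.e. ε(𝔞)_i = −1 and ε(𝔞)_{i+1} = +1). Then E_i ξ_𝔞 = ξ_{◇_i(𝔞)}, where ◇_i(𝔞) is the noncrossing half-diagram whose encoding is obtained from ε(𝔞) by replacing the entries (−1,+1) at positions (i,i+1) by (+1,−1). -/

import Mathlib

open scoped BigOperators

/-- A noncrossing half-diagram on `n` points (realized as `Fin n`): a partial matching
of `{1,…,n}` into two-element arcs, with no crossing pair of arcs and no through-string
(unmatched point) lying strictly inside an arc. -/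
structure HalfDiag (n : ℕ) where
  arcs : Finset (Finset (Fin n))
  two : ∀ a ∈ arcs, a.card = 2
  disj : ∀ a ∈ arcs, ∀ b ∈ arcs, a ≠ b → Disjoint a b
  nc1 : ∀ a ∈ arcs, ∀ b ∈ arcs, ∀ i j k l : Fin n,
      i ∈ a → j ∈ a → k ∈ b → l ∈ b → i < k → k < j → j < l → False
  nc2 : ∀ a ∈ arcs, ∀ i j : Fin n, i ∈ a → j ∈ a →
      ∀ k : Fin n, (∀ b ∈ arcs, k ∉ b) → i < k → k < j → False

noncomputable section

attribute [local instance] Classical.propDecidable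

/-- `x` is matched (covered by an arc) in the arc set `A`. -/
def covered {n : ℕ} (A : Finset (Finset (Fin n))) (x : Fin n) : Prop :=
  ∃ c ∈ A, x ∈ c

/-- The arc set obtained from `A` by the Temperley–Lieb action at the pair `(x, y)`:
insert the arc `{x, y}`, keep all arcs disjoint from `{x, y}`, and if both `x` and `y`
were matched (to `j` and `k` say), add the arc `{j, k}`; a single former partner
becomes a through-string. -/
def newArcs {n : ℕ} (x y : Fin n) (A : Finset (Finset (Fin n))) :
    Finset (Finset (Fin n)) :=
  let P := ((A.filter fun c => x ∈ c ∨ y ∈ c).biUnion id) \ {x, y}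
  insert {x, y} ((A.filter fun c => x ∉ c ∧ y ∉ c) ∪ (if P.card = 2 then {P} else ∅))

/-- The complex vector space with basis the noncrossing half-diagrams on `n` points. -/
abbrev V (n : ℕ) := HalfDiag n →₀ ℂ

/-- The basis vector of `V n` indexed by the half-diagram `a`. -/
def xi {n : ℕ} (a : HalfDiag n) : V n := Finsupp.single a 1

/-- The action of the Temperley–Lieb generator `E_i` (`1 ≤ i ≤ n−1`, acting on the
points `i`, `i+1`, i.e. the `Fin n` values `i−1`, `i`) on a basis vector. -/
def Eact (q : ℂ) {n : ℕ} (i : ℕ) (a : HalfDiag n) : V n :=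
  if h : 1 ≤ i ∧ i < n then
    let x : Fin n := ⟨i - 1, by omega⟩
    let y : Fin n := ⟨i, h.2⟩
    if ({x, y} : Finset (Fin n)) ∈ a.arcs then q • xi a
    else if ¬ covered a.arcs x ∧ ¬ covered a.arcs y then 0
    else if hb : ∃ b : HalfDiag n, b.arcs = newArcs x y a.arcs then xi hb.choose
    else 0
  else 0

/-- The linear map `E_i` on `V n`. -/
def Eop (q : ℂ) (n : ℕ) (i : ℕ) : V n →ₗ[ℂ] V n :=
  Finsupp.lsum ℂ fun a => LinearMap.toSpanSingleton ℂ (V n) (Eact q i a)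

/-- The encoding of a half-diagram: `-1` at the larger point of each arc,
`+1` elsewhere (through-strings and smaller points of arcs). -/
def encode {n : ℕ} (a : HalfDiag n) : Fin n → ℤ := fun i =>
  if ∃ c ∈ a.arcs, i ∈ c ∧ ∃ j ∈ c, j < i then -1 else 1

/-- The height `h_i(a) = i − 2·(number of arcs of `a` contained in the first `i`
points)`. -/
def ht {n : ℕ} (a : HalfDiag n) (i : ℕ) : ℤ :=
  (i : ℤ) - 2 * ((a.arcs.filter fun c => ∀ x : Fin n, x ∈ c → (x : ℕ) < i).card : ℤ)

/-- `b` is obtained from `a` by box addition at `i`: `a` has a minimum at `i`,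
`h_i(b) = h_i(a) + 2`, and all other heights agree. -/
def IsBoxAdd {n : ℕ} (a b : HalfDiag n) (i : ℕ) : Prop :=
  1 ≤ i ∧ i + 1 ≤ n ∧ ht a i < ht a (i - 1) ∧ ht a i < ht a (i + 1) ∧
  ht b i = ht a i + 2 ∧ ∀ j ≤ n, j ≠ i → ht b j = ht a j

/-- `m` is the minimal half-diagram with `p` arcs: its arcs are
`{1,2}, {3,4}, …, {2p−1, 2p}` (zero-based: `{2j, 2j+1}` for `j < p`). -/
def IsMinDiag {n : ℕ} (p : ℕ) (m : HalfDiag n) : Prop :=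
  m.arcs.card = p ∧ ∀ c ∈ m.arcs, ∃ x y : Fin n, c = {x, y} ∧
    (y : ℕ) = (x : ℕ) + 1 ∧ (x : ℕ) % 2 = 0 ∧ (x : ℕ) < 2 * p

/-- `Δ k q` is the value at `q/2` of the degree-`k` Chebyshev polynomial of the
second kind. -/
def Delta (k : ℤ) (q : ℝ) : ℝ :=
  (Polynomial.Chebyshev.U ℝ k).eval (q / 2)

/-- `μ k q = Δ_{k-1}(q) / Δ_k(q)`. -/
def mu (k : ℤ) (q : ℝ) : ℝ :=
  Delta (k - 1) q / Delta k q

/-- The vector obtained from `ξ_{d 0}` by applying the white box addition operators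
`E_{i_k} − μ_{h_{i_k}(d (k−1)) + 1}` along the chain `d` with box-addition
positions `idx`. -/
def chainVec (q : ℝ) {n : ℕ} (d : ℕ → HalfDiag n) (idx : ℕ → ℕ) : ℕ → V n
  | 0 => xi (d 0)
  | k + 1 =>
      Eop (q : ℂ) n (idx (k + 1)) (chainVec q d idx k)
        - ((mu (ht (d k) (idx (k + 1)) + 1) q : ℝ) : ℂ) • chainVec q d idx k

/-- `d, idx` is a chain of `r` box additions from the minimal half-diagram with `p`
arcs to `a`. -/
def IsChainTo {n : ℕ} (p r : ℕ) (d : ℕ → HalfDiag n) (idx : ℕ → ℕ)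
    (a : HalfDiag n) : Prop :=
  IsMinDiag p (d 0) ∧ d r = a ∧ ∀ k < r, IsBoxAdd (d k) (d (k + 1)) (idx (k + 1))

/-- Adjacency in the multigraph union of the arcs of `a` and the arcs of `b`. -/
def unionAdj {n : ℕ} (a b : HalfDiag n) (x y : Fin n) : Prop :=
  x ≠ y ∧ (({x, y} : Finset (Fin n)) ∈ a.arcs ∨ ({x, y} : Finset (Fin n)) ∈ b.arcs)

/-- The connected component of `v` in the union multigraph of `a` and `b`. -/
def comp {n : ℕ} (a b : HalfDiag n) (v : Fin n) : Set (Fin n) :=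
  {w | Relation.ReflTransGen (unionAdj a b) v w}

/-- Every path component of the union multigraph joins a through-string of `a` to a
through-string of `b`: equivalently, each component contains at most one point
unmatched in `a` and at most one point unmatched in `b`. -/
def goodPair {n : ℕ} (a b : HalfDiag n) : Prop :=
  (∀ v w₁ w₂ : Fin n, w₁ ∈ comp a b v → w₂ ∈ comp a b v →
      ¬ covered a.arcs w₁ → ¬ covered a.arcs w₂ → w₁ = w₂) ∧
  (∀ v w₁ w₂ : Fin n, w₁ ∈ comp a b v → w₂ ∈ comp a b v →
      ¬ covered b.arcs w₁ → ¬ covered b.arcs w₂ → w₁ = w₂)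

/-- The set of cycle components of the union multigraph: components all of whose
points are matched in both `a` and `b`. -/
def cycleComps {n : ℕ} (a b : HalfDiag n) : Set (Set (Fin n)) :=
  {C | ∃ v : Fin n, C = comp a b v ∧ ∀ w ∈ C, covered a.arcs w ∧ covered b.arcs w}

/-- The inner product of two basis diagrams: `q^c` with `c` the number of closed
loops if every path joins a through-string of `a` to a through-string of `b`, and
`0` otherwise. -/
def inner0 (q : ℝ) {n : ℕ} (a b : HalfDiag n) : ℂ :=
  if goodPair a b then (q : ℂ) ^ (cycleComps a b).ncard else 0

/-- The sesquilinear form on `V n` (conjugate-linear in the second argument)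
extending `inner0`. -/
def form (q : ℝ) {n : ℕ} (v w : V n) : ℂ :=
  ∑ a ∈ v.support, ∑ b ∈ w.support, v a * (starRingEnd ℂ) (w b) * inner0 q a b

/-- The descent-height sequence of a `±1`-sequence: the list of partial sums just
before each `-1`, in increasing order of position. -/
def descHeights (n : ℕ) (ε : Fin n → ℤ) : List ℤ :=
  ((List.finRange n).filter fun i => decide (ε i = -1)).map
    fun i => ∑ k ∈ Finset.univ.filter (fun k => k < i), ε k

end
section Aux
attribute [local instance] Classical.propDecidable
variable {n : ℕ}

theorem HalfDiag.ext' {a b : HalfDiag n} (h : a.arcs = b.arcs) : a = b := by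
  cases a; cases b; simp_all

theorem eq_pair {c : Finset (Fin n)} (h2 : c.card = 2) {u v : Fin n}
    (hu : u ∈ c) (hv : v ∈ c) (huv : u ≠ v) : c = {u, v} := by
  have hsub : ({u, v} : Finset (Fin n)) ⊆ c := by
    intro z hz; simp only [Finset.mem_insert, Finset.mem_singleton] at hz
    rcases hz with rfl | rfl <;> assumption
  have hcard : ({u, v} : Finset (Fin n)).card = 2 := Finset.card_pair huv
  exact (Finset.eq_of_subset_of_card_le hsub (by omega)).symm

theorem arc_unique (a : HalfDiag n) {c d : Finset (Fin n)} (hc : c ∈ a.arcs)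
    (hd : d ∈ a.arcs) {z : Fin n} (hzc : z ∈ c) (hzd : z ∈ d) : c = d := by
  by_contra h
  exact Finset.disjoint_left.mp (a.disj c hc d hd h) hzc hzd

theorem mem_pair_lt {u v i j : Fin n} (huv : u < v) (hi : i ∈ ({u, v} : Finset (Fin n)))
    (hj : j ∈ ({u, v} : Finset (Fin n))) (hij : i < j) : i = u ∧ j = v := by
  simp only [Finset.mem_insert, Finset.mem_singleton] at hi hj
  rcases hi with rfl | rfl <;> rcases hj with rfl | rfl
  · exact absurd hij (lt_irrefl _)
  · exact ⟨rfl, rfl⟩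
  · exact absurd (huv.trans hij) (lt_irrefl _)
  · exact absurd hij (lt_irrefl _)

theorem mem_newArcs_iff {x y : Fin n} {A : Finset (Finset (Fin n))} {d : Finset (Fin n)} :
    d ∈ newArcs x y A ↔ d = {x, y} ∨ (d ∈ A ∧ x ∉ d ∧ y ∉ d) ∨
      ((((A.filter fun c => x ∈ c ∨ y ∈ c).biUnion id) \ {x, y}).card = 2 ∧
        d = ((A.filter fun c => x ∈ c ∨ y ∈ c).biUnion id) \ {x, y}) := by
  unfold newArcs
  by_cases hc : (((A.filter fun c => x ∈ c ∨ y ∈ c).biUnion id) \ {x, y}).card = 2 <;>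
    simp [hc, Finset.mem_filter, and_comm, and_assoc] <;> tauto

end Aux
section Aux2
attribute [local instance] Classical.propDecidable
variable {n : ℕ}

theorem Eop_xi (q : ℂ) (i : ℕ) (a : HalfDiag n) : Eop q n i (xi a) = Eact q i a := by
  rw [xi, Eop, Finsupp.lsum_single, LinearMap.toSpanSingleton_apply, one_smul]

theorem Eop_eval (q : ℂ) (i : ℕ) (h1 : 1 ≤ i) (h2 : i < n) (a b : HalfDiag n)
    (hxy : ({⟨i - 1, by omega⟩, ⟨i, h2⟩} : Finset (Fin n)) ∉ a.arcs)
    (hcov : covered a.arcs ⟨i - 1, by omega⟩)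
    (hb : b.arcs = newArcs (⟨i - 1, by omega⟩ : Fin n) ⟨i, h2⟩ a.arcs) :
    Eop q n i (xi a) = xi b := by
  rw [Eop_xi, Eact]
  rw [dif_pos ⟨h1, h2⟩]
  dsimp only
  split_ifs with hA hB hC
  · exact absurd hA hxy
  · exact absurd hcov hB.1
  · exact congrArg xi (HalfDiag.ext' (hC.choose_spec.trans hb.symm))
  · exact absurd ⟨b, hb⟩ hC

end Aux2
section Aux3
attribute [local instance] Classical.propDecidable
variable {n : ℕ}

theorem main_aux {n : ℕ} (a : HalfDiag n) (x y : Fin n)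
    (hyx : (y : ℕ) = (x : ℕ) + 1)
    (hdown : encode a x = -1) (hup : encode a y = 1) :
    ∃ b : HalfDiag n, b.arcs = newArcs x y a.arcs ∧
      encode b = Function.update (Function.update (encode a) x 1) y (-1) ∧
      ({x, y} : Finset (Fin n)) ∉ a.arcs ∧ covered a.arcs x := by
  have hxy : x < y := by rw [Fin.lt_def]; omega
  have hP : ∃ c ∈ a.arcs, x ∈ c ∧ ∃ w ∈ c, w < x := by
    by_contra hP; rw [encode, if_neg hP] at hdown; norm_num at hdown
  have hQ : ¬ ∃ c ∈ a.arcs, y ∈ c ∧ ∃ w ∈ c, w < y := by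
    intro hQ; rw [encode, if_pos hQ] at hup; norm_num at hup
  obtain ⟨c1, hc1, hxc1, j, hjc1, hjx⟩ := hP
  have hc1eq : c1 = {j, x} := eq_pair (a.two c1 hc1) hjc1 hxc1 (ne_of_lt hjx)
  have hxyA : ({x, y} : Finset (Fin n)) ∉ a.arcs := fun h =>
    hQ ⟨{x, y}, h, by simp, x, by simp, hxy⟩
  have hcovx : covered a.arcs x := ⟨c1, hc1, hxc1⟩
  have hxarc : ∀ c ∈ a.arcs, x ∈ c → c = c1 := fun c hc hx =>
    arc_unique a hc hc1 hx hxc1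
  by_cases hcov : covered a.arcs y
  · -- Case B : y is matched in a, say to k
    obtain ⟨c2, hc2, hyc2⟩ := hcov
    obtain ⟨k, hkc2, hky⟩ : ∃ k ∈ c2, y < k := by
      obtain ⟨k, hk, hkne⟩ := Finset.exists_mem_ne
        (by rw [a.two c2 hc2]; norm_num) y
      refine ⟨k, hk, ?_⟩
      rcases lt_trichotomy k y with h | h | h
      · exact absurd ⟨c2, hc2, hyc2, k, hk, h⟩ hQ
      · exact absurd h hkne
      · exact h
    have hc2eq : c2 = {y, k} := eq_pair (a.two c2 hc2) hyc2 hkc2 (ne_of_lt hky)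
    have hyarc : ∀ c ∈ a.arcs, y ∈ c → c = c2 := fun c hc hy =>
      arc_unique a hc hc2 hy hyc2
    have hjk : j < k := hjx.trans (hxy.trans hky)
    have hPeq : ((a.arcs.filter fun c => x ∈ c ∨ y ∈ c).biUnion id) \ {x, y}
        = {j, k} := by
      ext z
      simp only [Finset.mem_sdiff, Finset.mem_biUnion, Finset.mem_filter, id_eq,
        Finset.mem_insert, Finset.mem_singleton]
      constructor
      · rintro ⟨⟨c, ⟨hc, hxc | hyc⟩, hzc⟩, hz⟩
        · rw [hxarc c hc hxc, hc1eq] at hzc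
          simp only [Finset.mem_insert, Finset.mem_singleton] at hzc
          rcases hzc with rfl | rfl
          · exact Or.inl rfl
          · exact absurd rfl (by push_neg at hz; exact hz.1)
        · rw [hyarc c hc hyc, hc2eq] at hzc
          simp only [Finset.mem_insert, Finset.mem_singleton] at hzc
          rcases hzc with rfl | rfl
          · exact absurd rfl (by push_neg at hz; exact hz.2)
          · exact Or.inr rfl
      · rintro (rfl | rfl)
        · refine ⟨⟨c1, ⟨hc1, Or.inl hxc1⟩, hjc1⟩, ?_⟩
          push_neg
          exact ⟨ne_of_lt hjx, ne_of_lt (hjx.trans hxy)⟩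
        · refine ⟨⟨c2, ⟨hc2, Or.inr hyc2⟩, hkc2⟩, ?_⟩
          push_neg
          exact ⟨ne_of_gt (hxy.trans hky), ne_of_gt hky⟩
    have hmem : ∀ d : Finset (Fin n), d ∈ newArcs x y a.arcs ↔
        d = {x, y} ∨ (d ∈ a.arcs ∧ x ∉ d ∧ y ∉ d) ∨ d = {j, k} := by
      intro d
      rw [mem_newArcs_iff, hPeq]
      simp [Finset.card_pair (ne_of_lt hjk)]
    -- inequalities on values
    have vjx : (j : ℕ) < x := hjx
    have vky : (y : ℕ) < k := hky
    refine ⟨⟨newArcs x y a.arcs, ?_, ?_, ?_, ?_⟩, rfl, ?_, hxyA, hcovx⟩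
    · -- two
      intro d hd
      rcases (hmem d).1 hd with rfl | ⟨hdA, _, _⟩ | rfl
      · exact Finset.card_pair (ne_of_lt hxy)
      · exact a.two d hdA
      · exact Finset.card_pair (ne_of_lt hjk)
    · -- disj
      intro d hd e he hne
      rw [Finset.disjoint_left]
      intro z hzd hze
      have hjx' : j ≠ x := ne_of_lt hjx
      have hjy' : j ≠ y := ne_of_lt (hjx.trans hxy)
      have hjk' : j ≠ k := ne_of_lt hjk
      have hxy' : x ≠ y := ne_of_lt hxy
      have hxk' : x ≠ k := ne_of_lt (hxy.trans hky)
      have hyk' : y ≠ k := ne_of_lt hky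
      rcases (hmem d).1 hd with rfl | ⟨hdA, hxd, hyd⟩ | rfl <;>
        rcases (hmem e).1 he with rfl | ⟨heA, hxe, hye⟩ | rfl
      · exact hne rfl
      · simp only [Finset.mem_insert, Finset.mem_singleton] at hzd
        rcases hzd with rfl | rfl
        · exact hxe hze
        · exact hye hze
      · simp only [Finset.mem_insert, Finset.mem_singleton] at hzd hze
        rcases hzd with rfl | rfl <;> rcases hze with h | h
        · exact hjx' h.symm
        · exact hxk' h
        · exact hjy' h.symm
        · exact hyk' h
      · simp only [Finset.mem_insert, Finset.mem_singleton] at hze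
        rcases hze with rfl | rfl
        · exact hxd hzd
        · exact hyd hzd
      · exact Finset.disjoint_left.mp (a.disj d hdA e heA hne) hzd hze
      · simp only [Finset.mem_insert, Finset.mem_singleton] at hze
        rcases hze with rfl | rfl
        · exact hxd (by rw [arc_unique a hdA hc1 hzd hjc1, hc1eq]; simp)
        · exact hyd (by rw [arc_unique a hdA hc2 hzd hkc2, hc2eq]; simp)
      · simp only [Finset.mem_insert, Finset.mem_singleton] at hzd hze
        rcases hzd with rfl | rfl <;> rcases hze with h | h
        · exact hjx' h
        · exact hjy' h
        · exact hxk' h.symm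
        · exact hyk' h.symm
      · simp only [Finset.mem_insert, Finset.mem_singleton] at hzd
        rcases hzd with rfl | rfl
        · exact hxe (by rw [arc_unique a heA hc1 hze hjc1, hc1eq]; simp)
        · exact hye (by rw [arc_unique a heA hc2 hze hkc2, hc2eq]; simp)
      · exact hne rfl
    · -- nc1
      intro d hd e he i' j' k' l' hi' hj' hk' hl' h1' h2' h3'
      rcases (hmem d).1 hd with rfl | ⟨hdA, hxd, hyd⟩ | rfl <;>
        rcases (hmem e).1 he with rfl | ⟨heA, hxe, hye⟩ | rfl
      -- 1: d = e = {x,y}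
      · obtain ⟨rfl, rfl⟩ := mem_pair_lt hxy hi' hj' (h1'.trans h2')
        have := Fin.lt_def.mp h1'; have := Fin.lt_def.mp h2'; omega
      -- 2: d = {x,y}, e retained
      · obtain ⟨rfl, rfl⟩ := mem_pair_lt hxy hi' hj' (h1'.trans h2')
        have := Fin.lt_def.mp h1'; have := Fin.lt_def.mp h2'; omega
      -- 3: d = {x,y}, e = {j,k}
      · obtain ⟨rfl, rfl⟩ := mem_pair_lt hxy hi' hj' (h1'.trans h2')
        have := Fin.lt_def.mp h1'; have := Fin.lt_def.mp h2'; omega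
      -- 4: d retained, e = {x,y}
      · obtain ⟨rfl, rfl⟩ := mem_pair_lt hxy hk' hl' (h2'.trans h3')
        have := Fin.lt_def.mp h2'; have := Fin.lt_def.mp h3'; omega
      -- 5: retained / retained
      · exact a.nc1 d hdA e heA i' j' k' l' hi' hj' hk' hl' h1' h2' h3'
      -- 6: d retained, e = {j,k}
      · obtain ⟨rfl, rfl⟩ := mem_pair_lt hjk hk' hl' (h2'.trans h3')
        have hj'x : j' ≠ x := fun h => hxd (h ▸ hj')
        have hj'y : j' ≠ y := fun h => hyd (h ▸ hj')
        have : j' < x ∨ y < j' := by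
          rw [Fin.lt_def, Fin.lt_def]
          have := Fin.val_ne_of_ne hj'x; have := Fin.val_ne_of_ne hj'y; omega
        rcases this with h | h
        · exact a.nc1 d hdA c1 hc1 i' j' k' x hi' hj' hjc1 hxc1 h1' h2' h
        · exact a.nc1 d hdA c2 hc2 i' j' y l' hi' hj' hyc2 hkc2
            (h1'.trans (hjx.trans hxy)) h h3'
      -- 7: d = {j,k}, e = {x,y}
      · obtain ⟨rfl, rfl⟩ := mem_pair_lt hxy hk' hl' (h2'.trans h3')
        have := Fin.lt_def.mp h2'; have := Fin.lt_def.mp h3'; omega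
      -- 8: d = {j,k}, e retained
      · obtain ⟨rfl, rfl⟩ := mem_pair_lt hjk hi' hj' (h1'.trans h2')
        have hk'x : k' ≠ x := fun h => hxe (h ▸ hk')
        have hk'y : k' ≠ y := fun h => hye (h ▸ hk')
        have : k' < x ∨ y < k' := by
          rw [Fin.lt_def, Fin.lt_def]
          have := Fin.val_ne_of_ne hk'x; have := Fin.val_ne_of_ne hk'y; omega
        rcases this with h | h
        · exact a.nc1 c1 hc1 e heA i' x k' l' hjc1 hxc1 hk' hl' h1' h
            (hxy.trans (hky.trans h3'))
        · exact a.nc1 c2 hc2 e heA y j' k' l' hyc2 hkc2 hk' hl' h h2' h3'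
      -- 9: d = e = {j,k}
      · obtain ⟨rfl, rfl⟩ := mem_pair_lt hjk hi' hj' (h1'.trans h2')
        simp only [Finset.mem_insert, Finset.mem_singleton] at hk'
        rcases hk' with rfl | rfl
        · exact absurd h1' (lt_irrefl _)
        · exact absurd h2' (lt_irrefl _)
    · -- nc2
      intro d hd i' j' hi' hj' t ht h1' h2'
      have htx : t ≠ x := fun h => ht {x, y} ((hmem _).2 (Or.inl rfl)) (by simp [h])
      have hty : t ≠ y := fun h => ht {x, y} ((hmem _).2 (Or.inl rfl)) (by simp [h])
      have htj : t ≠ j := fun h =>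
        ht {j, k} ((hmem _).2 (Or.inr (Or.inr rfl))) (by simp [h])
      have htk : t ≠ k := fun h =>
        ht {j, k} ((hmem _).2 (Or.inr (Or.inr rfl))) (by simp [h])
      have htA : ∀ c ∈ a.arcs, t ∉ c := by
        intro c hc htc
        by_cases hxc : x ∈ c
        · rw [hxarc c hc hxc, hc1eq] at htc
          simp only [Finset.mem_insert, Finset.mem_singleton] at htc
          rcases htc with rfl | rfl
          · exact htj rfl
          · exact htx rfl
        by_cases hyc : y ∈ c
        · rw [hyarc c hc hyc, hc2eq] at htc
          simp only [Finset.mem_insert, Finset.mem_singleton] at htc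
          rcases htc with rfl | rfl
          · exact hty rfl
          · exact htk rfl
        · exact ht c ((hmem c).2 (Or.inr (Or.inl ⟨hc, hxc, hyc⟩))) htc
      rcases (hmem d).1 hd with rfl | ⟨hdA, _, _⟩ | rfl
      · obtain ⟨rfl, rfl⟩ := mem_pair_lt hxy hi' hj' (h1'.trans h2')
        have := Fin.lt_def.mp h1'; have := Fin.lt_def.mp h2'; omega
      · exact a.nc2 d hdA i' j' hi' hj' t htA h1' h2'
      · obtain ⟨rfl, rfl⟩ := mem_pair_lt hjk hi' hj' (h1'.trans h2')
        have : t < x ∨ y < t := by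
          rw [Fin.lt_def, Fin.lt_def]
          have := Fin.val_ne_of_ne htx; have := Fin.val_ne_of_ne hty; omega
        rcases this with h | h
        · exact a.nc2 c1 hc1 i' x hjc1 hxc1 t htA h1' h
        · exact a.nc2 c2 hc2 y j' hyc2 hkc2 t htA h h2'
    · -- encode equality
      funext z
      by_cases hzy : z = y
      · subst hzy
        rw [Function.update_self, encode,
          if_pos ⟨{x, z}, (hmem _).2 (Or.inl rfl), by simp, x, by simp, hxy⟩]
      by_cases hzx : z = x
      · subst hzx
        rw [Function.update_of_ne hzy, Function.update_self, encode, if_neg]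
        rintro ⟨c, hc, hzc, w, hwc, hwz⟩
        rcases (hmem c).1 hc with rfl | ⟨_, hxc, _⟩ | rfl
        · simp only [Finset.mem_insert, Finset.mem_singleton] at hwc
          rcases hwc with rfl | rfl
          · exact absurd hwz (lt_irrefl _)
          · exact absurd (hwz.trans hxy) (lt_irrefl _)
        · exact hxc hzc
        · simp only [Finset.mem_insert, Finset.mem_singleton] at hzc
          rcases hzc with rfl | rfl
          · exact absurd hjx (lt_irrefl _)
          · exact absurd (hxy.trans hky) (lt_irrefl _)
      · rw [Function.update_of_ne hzy, Function.update_of_ne hzx, encode, encode]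
        refine if_congr ⟨?_, ?_⟩ rfl rfl
        · rintro ⟨c, hc, hzc, w, hwc, hwz⟩
          rcases (hmem c).1 hc with rfl | ⟨hcA, _, _⟩ | rfl
          · simp only [Finset.mem_insert, Finset.mem_singleton] at hzc
            rcases hzc with rfl | rfl
            · exact absurd rfl hzx
            · exact absurd rfl hzy
          · exact ⟨c, hcA, hzc, w, hwc, hwz⟩
          · simp only [Finset.mem_insert, Finset.mem_singleton] at hzc
            rcases hzc with rfl | rfl
            · simp only [Finset.mem_insert, Finset.mem_singleton] at hwc
              rcases hwc with rfl | rfl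
              · exact absurd hwz (lt_irrefl _)
              · exact absurd (hwz.trans hjk) (lt_irrefl _)
            · exact ⟨c2, hc2, hkc2, y, hyc2, hky⟩
        · rintro ⟨c, hc, hzc, w, hwc, hwz⟩
          by_cases hxc : x ∈ c
          · exfalso
            rw [hxarc c hc hxc, hc1eq] at hzc hwc
            simp only [Finset.mem_insert, Finset.mem_singleton] at hzc hwc
            rcases hzc with rfl | rfl
            · rcases hwc with rfl | rfl
              · exact absurd hwz (lt_irrefl _)
              · exact absurd (hjx.trans hwz) (lt_irrefl _)
            · exact hzx rfl
          by_cases hyc : y ∈ c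
          · have hzk : z = k := by
              rw [hyarc c hc hyc, hc2eq] at hzc
              simp only [Finset.mem_insert, Finset.mem_singleton] at hzc
              rcases hzc with rfl | rfl
              · exact absurd rfl hzy
              · rfl
            subst hzk
            exact ⟨{j, z}, (hmem _).2 (Or.inr (Or.inr rfl)), by simp, j, by simp, hjk⟩
          · exact ⟨c, (hmem c).2 (Or.inr (Or.inl ⟨hc, hxc, hyc⟩)), hzc, w, hwc, hwz⟩
  · -- Case A : y is a through-string of a
    have hynotin : ∀ c ∈ a.arcs, y ∉ c := fun c hc hy => hcov ⟨c, hc, hy⟩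
    have hPeq : ((a.arcs.filter fun c => x ∈ c ∨ y ∈ c).biUnion id) \ {x, y}
        = {j} := by
      ext z
      simp only [Finset.mem_sdiff, Finset.mem_biUnion, Finset.mem_filter, id_eq,
        Finset.mem_insert, Finset.mem_singleton]
      constructor
      · rintro ⟨⟨c, ⟨hc, hxc | hyc⟩, hzc⟩, hz⟩
        · rw [hxarc c hc hxc, hc1eq] at hzc
          simp only [Finset.mem_insert, Finset.mem_singleton] at hzc
          rcases hzc with rfl | rfl
          · rfl
          · exact absurd rfl (by push_neg at hz; exact hz.1)
        · exact absurd hyc (hynotin c hc)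
      · rintro rfl
        refine ⟨⟨c1, ⟨hc1, Or.inl hxc1⟩, hjc1⟩, ?_⟩
        push_neg
        exact ⟨ne_of_lt hjx, ne_of_lt (hjx.trans hxy)⟩
    have hmem : ∀ d : Finset (Fin n), d ∈ newArcs x y a.arcs ↔
        d = {x, y} ∨ (d ∈ a.arcs ∧ x ∉ d ∧ y ∉ d) := by
      intro d
      rw [mem_newArcs_iff, hPeq]
      simp
    refine ⟨⟨newArcs x y a.arcs, ?_, ?_, ?_, ?_⟩, rfl, ?_, hxyA, hcovx⟩
    · -- two
      intro d hd
      rcases (hmem d).1 hd with rfl | ⟨hdA, _, _⟩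
      · exact Finset.card_pair (ne_of_lt hxy)
      · exact a.two d hdA
    · -- disj
      intro d hd e he hne
      rw [Finset.disjoint_left]
      intro z hzd hze
      rcases (hmem d).1 hd with rfl | ⟨hdA, hxd, hyd⟩ <;>
        rcases (hmem e).1 he with rfl | ⟨heA, hxe, hye⟩
      · exact hne rfl
      · simp only [Finset.mem_insert, Finset.mem_singleton] at hzd
        rcases hzd with rfl | rfl
        · exact hxe hze
        · exact hye hze
      · simp only [Finset.mem_insert, Finset.mem_singleton] at hze
        rcases hze with rfl | rfl
        · exact hxd hzd
        · exact hyd hzd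
      · exact Finset.disjoint_left.mp (a.disj d hdA e heA hne) hzd hze
    · -- nc1
      intro d hd e he i' j' k' l' hi' hj' hk' hl' h1' h2' h3'
      rcases (hmem d).1 hd with rfl | ⟨hdA, hxd, hyd⟩ <;>
        rcases (hmem e).1 he with rfl | ⟨heA, hxe, hye⟩
      · obtain ⟨rfl, rfl⟩ := mem_pair_lt hxy hi' hj' (h1'.trans h2')
        have := Fin.lt_def.mp h1'; have := Fin.lt_def.mp h2'; omega
      · obtain ⟨rfl, rfl⟩ := mem_pair_lt hxy hi' hj' (h1'.trans h2')
        have := Fin.lt_def.mp h1'; have := Fin.lt_def.mp h2'; omega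
      · obtain ⟨rfl, rfl⟩ := mem_pair_lt hxy hk' hl' (h2'.trans h3')
        have := Fin.lt_def.mp h2'; have := Fin.lt_def.mp h3'; omega
      · exact a.nc1 d hdA e heA i' j' k' l' hi' hj' hk' hl' h1' h2' h3'
    · -- nc2
      intro d hd i' j' hi' hj' t ht h1' h2'
      have htx : t ≠ x := fun h => ht {x, y} ((hmem _).2 (Or.inl rfl)) (by simp [h])
      have hty : t ≠ y := fun h => ht {x, y} ((hmem _).2 (Or.inl rfl)) (by simp [h])
      have htA : (∀ c ∈ a.arcs, t ∉ c) ∨ t = j := by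
        by_cases htj : t = j
        · exact Or.inr htj
        · refine Or.inl fun c hc htc => ?_
          by_cases hxc : x ∈ c
          · rw [hxarc c hc hxc, hc1eq] at htc
            simp only [Finset.mem_insert, Finset.mem_singleton] at htc
            rcases htc with rfl | rfl
            · exact htj rfl
            · exact htx rfl
          by_cases hyc : y ∈ c
          · exact hynotin c hc hyc
          · exact ht c ((hmem c).2 (Or.inr ⟨hc, hxc, hyc⟩)) htc
      rcases (hmem d).1 hd with rfl | ⟨hdA, hxd, hyd⟩
      · obtain ⟨rfl, rfl⟩ := mem_pair_lt hxy hi' hj' (h1'.trans h2')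
        have := Fin.lt_def.mp h1'; have := Fin.lt_def.mp h2'; omega
      · rcases htA with htA | heq
        · exact a.nc2 d hdA i' j' hi' hj' t htA h1' h2'
        · have htc1 : t ∈ c1 := by rw [heq]; exact hjc1
          have htltx : t < x := by rw [heq]; exact hjx
          have hj'x : j' ≠ x := fun h => hxd (h ▸ hj')
          have hj'y : j' ≠ y := fun h => hyd (h ▸ hj')
          have : j' < x ∨ y < j' := by
            rw [Fin.lt_def, Fin.lt_def]
            have := Fin.val_ne_of_ne hj'x; have := Fin.val_ne_of_ne hj'y; omega
          rcases this with h | h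
          · exact a.nc1 d hdA c1 hc1 i' j' t x hi' hj' htc1 hxc1 h1' h2' h
          · exact a.nc2 d hdA i' j' hi' hj' y hynotin
              (h1'.trans (htltx.trans hxy)) h
    · -- encode equality
      funext z
      by_cases hzy : z = y
      · subst hzy
        rw [Function.update_self, encode,
          if_pos ⟨{x, z}, (hmem _).2 (Or.inl rfl), by simp, x, by simp, hxy⟩]
      by_cases hzx : z = x
      · subst hzx
        rw [Function.update_of_ne hzy, Function.update_self, encode, if_neg]
        rintro ⟨c, hc, hzc, w, hwc, hwz⟩
        rcases (hmem c).1 hc with rfl | ⟨_, hxc, _⟩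
        · simp only [Finset.mem_insert, Finset.mem_singleton] at hwc
          rcases hwc with rfl | rfl
          · exact absurd hwz (lt_irrefl _)
          · exact absurd (hwz.trans hxy) (lt_irrefl _)
        · exact hxc hzc
      · rw [Function.update_of_ne hzy, Function.update_of_ne hzx, encode, encode]
        refine if_congr ⟨?_, ?_⟩ rfl rfl
        · rintro ⟨c, hc, hzc, w, hwc, hwz⟩
          rcases (hmem c).1 hc with rfl | ⟨hcA, _, _⟩
          · simp only [Finset.mem_insert, Finset.mem_singleton] at hzc
            rcases hzc with rfl | rfl
            · exact absurd rfl hzx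
            · exact absurd rfl hzy
          · exact ⟨c, hcA, hzc, w, hwc, hwz⟩
        · rintro ⟨c, hc, hzc, w, hwc, hwz⟩
          by_cases hxc : x ∈ c
          · exfalso
            rw [hxarc c hc hxc, hc1eq] at hzc hwc
            simp only [Finset.mem_insert, Finset.mem_singleton] at hzc hwc
            rcases hzc with rfl | rfl
            · rcases hwc with rfl | rfl
              · exact absurd hwz (lt_irrefl _)
              · exact absurd (hjx.trans hwz) (lt_irrefl _)
            · exact hzx rfl
          by_cases hyc : y ∈ c
          · exact absurd hyc (hynotin c hc)
          · exact ⟨c, (hmem c).2 (Or.inr ⟨hc, hxc, hyc⟩), hzc, w, hwc, hwz⟩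

end Aux3

/-- If the half-diagram `a` has a minimum at position `i` (its encoding has `-1` at
position `i` and `+1` at position `i+1`), then `E_i ξ_a = ξ_{◇_i(a)}`, where
`◇_i(a)` is the half-diagram whose encoding is that of `a` with these two entries
swapped. -/
theorem Eop_xi_of_min (q : ℂ) (n p : ℕ) (a : HalfDiag n) (hp : a.arcs.card = p)
    (i : ℕ) (h1 : 1 ≤ i) (h2 : i < n)
    (hdown : encode a ⟨i - 1, by omega⟩ = -1) (hup : encode a ⟨i, h2⟩ = 1) :
    ∃ b : HalfDiag n,
      encode b = Function.update (Function.update (encode a) ⟨i - 1, by omega⟩ 1)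
          ⟨i, h2⟩ (-1) ∧
      Eop q n i (xi a) = xi b := by
  obtain ⟨b, hb, henc, hxyA, hcovx⟩ :=
    main_aux a ⟨i - 1, by omega⟩ ⟨i, h2⟩ (by simp only [Fin.val_mk]; omega) hdown hup
  exact ⟨b, henc, Eop_eval q i h1 h2 a b hxyA hcovx hb⟩
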